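/- Let (B,N) be a pseudo-Hessian-Nijenhuis structure on a finite-dimensional pre-Lie algebra (g,·). For k ∈ ℤ define B_k(x,y) = B(x, N^k(y)). Then for every k ∈ ℤ, B_k is a pseudo-Hessian structure on (g,·) (i.e. B_k is symmetric, nondegenerate, and satisfies B_k(x·y,z) − B_k(x,y·z) = B_k(y·x,z) − B_k(y,x·z) for all x,y,z). Furthermore, for all k,l ∈ ℤ with l ≠ 0, the pair (B_k, N^l) is again a pseudo-Hessian-Nijenhuis structure on (g,·). -/

import Mathlib

set_option linter.unusedSectionVars false

variable {K : Type*} [Field K] [CharZero K]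
variable {g : Type*} [AddCommGroup g] [Module K g]

/-- The pre-Lie identity for a bilinear multiplication. -/
def IsPreLie (mul : g →ₗ[K] g →ₗ[K] g) : Prop :=
  ∀ x y z : g, mul (mul x y) z - mul x (mul y z) = mul (mul y x) z - mul y (mul x z)

/-- A Nijenhuis operator on a pre-Lie algebra. -/
def IsNijenhuis (mul : g →ₗ[K] g →ₗ[K] g) (N : g →ₗ[K] g) : Prop :=
  ∀ x y : g, mul (N x) (N y) = N (mul (N x) y + mul x (N y) - N (mul x y))

/-- A pseudo-Hessian structure: a symmetric nondegenerate 2-cocycle. -/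
def IsPseudoHessian (mul : g →ₗ[K] g →ₗ[K] g) (B : g → g → K) : Prop :=
  (∀ x y : g, B x y = B y x) ∧
  (∀ x : g, (∀ y : g, B x y = 0) → x = 0) ∧
  (∀ x y z : g, B (mul x y) z - B x (mul y z) = B (mul y x) z - B y (mul x z))

/-- A pseudo-Hessian-Nijenhuis structure `(B, N)`: `B` is pseudo-Hessian, `N` is an invertible
Nijenhuis operator, `B(N x, y) = B(x, N y)`, and `B₁(x,y) = B(x, N y)` is a 2-cocycle. -/
def IsPseudoHessianNijenhuis (mul : g →ₗ[K] g →ₗ[K] g) (B : g → g → K)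
    (N : g ≃ₗ[K] g) : Prop :=
  IsPseudoHessian mul B ∧
  IsNijenhuis mul (N : g →ₗ[K] g) ∧
  (∀ x y : g, B (N x) y = B x (N y)) ∧
  (∀ x y z : g,
    B (mul x y) (N z) - B x (N (mul y z)) = B (mul y x) (N z) - B y (N (mul x z)))

namespace PHN

lemma zpow_succ_apply (N : g ≃ₗ[K] g) (j : ℤ) (u : g) :
    (N ^ (j + 1)) u = N ((N ^ j) u) := by
  rw [add_comm, zpow_add, zpow_one]; rfl

lemma zpow_succ_apply' (N : g ≃ₗ[K] g) (j : ℤ) (u : g) :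
    (N ^ (j + 1)) u = (N ^ j) (N u) := by
  rw [zpow_add, zpow_one]; rfl

lemma zpow_pred_apply (N : g ≃ₗ[K] g) (j : ℤ) (u : g) :
    (N ^ (j - 1)) u = N.symm ((N ^ j) u) := by
  rw [sub_eq_add_neg, add_comm, zpow_add, zpow_neg, zpow_one]; rfl

lemma zpow_pred_apply' (N : g ≃ₗ[K] g) (j : ℤ) (u : g) :
    (N ^ (j - 1)) u = (N ^ j) (N.symm u) := by
  rw [sub_eq_add_neg, zpow_add, zpow_neg, zpow_one]; rfl

lemma zpow_comm_apply (N : g ≃ₗ[K] g) (a b : ℤ) (u : g) :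
    (N ^ a) ((N ^ b) u) = (N ^ (a + b)) u := by
  rw [zpow_add]; rfl

/-- The inverse of an invertible Nijenhuis operator is Nijenhuis. -/
lemma symm_nijenhuis (mul : g →ₗ[K] g →ₗ[K] g) (N : g ≃ₗ[K] g)
    (hN : IsNijenhuis mul (N : g →ₗ[K] g)) :
    IsNijenhuis mul (N.symm : g →ₗ[K] g) := by
  intro x y
  simp only [LinearEquiv.coe_coe]
  have h := hN (N.symm x) (N.symm y)
  simp only [LinearEquiv.coe_coe, LinearEquiv.apply_symm_apply] at h
  have h2 := congrArg N.symm h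
  simp only [LinearEquiv.symm_apply_apply, map_add, map_sub] at h2
  rw [LinearEquiv.eq_symm_apply]
  rw [h2]
  abel

/-- The fundamental product identity for powers of a Nijenhuis operator. -/
lemma pow_identity (mul : g →ₗ[K] g →ₗ[K] g) (M : g →ₗ[K] g)
    (hN : IsNijenhuis mul M) :
    ∀ p q : ℕ, ∀ x y : g, mul ((M ^ p) x) ((M ^ q) y)
      = (M ^ q) (mul ((M ^ p) x) y) + (M ^ p) (mul x ((M ^ q) y))
        - (M ^ p) ((M ^ q) (mul x y)) := by
  have hsucc : ∀ (n : ℕ) (u : g), (M ^ (n + 1)) u = M ((M ^ n) u) := by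
    intro n u; rw [pow_succ']; rfl
  have C1 : ∀ q : ℕ, ∀ x y : g, mul (M x) ((M ^ q) y)
      = (M ^ q) (mul (M x) y) + M (mul x ((M ^ q) y)) - M ((M ^ q) (mul x y)) := by
    intro q
    induction q with
    | zero => intro x y; simp
    | succ q ih =>
      intro x y
      rw [hsucc q y, hN x ((M ^ q) y), ih x y]
      simp only [map_add, map_sub, hsucc]
      abel
  intro p
  induction p with
  | zero => intro q x y; simp
  | succ p ih =>
    intro q x y
    rw [hsucc p x, C1 q ((M ^ p) x) y, ih q x y]
    simp only [map_add, map_sub, hsucc]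
    abel

/-- Natural powers of a Nijenhuis operator are Nijenhuis. -/
lemma pow_nijenhuis (mul : g →ₗ[K] g →ₗ[K] g) (M : g →ₗ[K] g)
    (hN : IsNijenhuis mul M) (n : ℕ) : IsNijenhuis mul (M ^ n) := by
  intro x y
  rw [map_sub, map_add]
  exact pow_identity mul M hN n n x y

lemma zpow_nat_app (N : g ≃ₗ[K] g) (n : ℕ) (u : g) :
    (N ^ (n : ℤ)) u = (((N : g →ₗ[K] g)) ^ n) u := by
  induction n with
  | zero => simp
  | succ n ih =>
    rw [show ((n + 1 : ℕ) : ℤ) = (n : ℤ) + 1 by push_cast; ring,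
      zpow_succ_apply, ih, pow_succ']
    rfl

lemma zpow_neg_nat_app (N : g ≃ₗ[K] g) (n : ℕ) (u : g) :
    (N ^ (-(n : ℤ))) u = (((N.symm : g →ₗ[K] g)) ^ n) u := by
  induction n with
  | zero => simp
  | succ n ih =>
    rw [show (-((n + 1 : ℕ) : ℤ)) = (-(n : ℤ)) - 1 by push_cast; ring,
      zpow_pred_apply, ih, pow_succ']
    rfl

/-- Integer powers of an invertible Nijenhuis operator are Nijenhuis. -/
lemma zpow_nijenhuis (mul : g →ₗ[K] g →ₗ[K] g) (N : g ≃ₗ[K] g)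
    (hN : IsNijenhuis mul (N : g →ₗ[K] g)) (l : ℤ) :
    IsNijenhuis mul ((N ^ l : g ≃ₗ[K] g) : g →ₗ[K] g) := by
  obtain ⟨n, rfl | rfl⟩ := l.eq_nat_or_neg
  · intro x y
    simp only [LinearEquiv.coe_coe, zpow_nat_app]
    exact pow_nijenhuis mul _ hN n x y
  · intro x y
    simp only [LinearEquiv.coe_coe, zpow_neg_nat_app]
    exact pow_nijenhuis mul _ (symm_nijenhuis mul N hN) n x y

/-- `B(N^j x, y) = B(x, N^j y)` for all integers `j`. -/
lemma zpow_compat (B : g →ₗ[K] g →ₗ[K] K) (N : g ≃ₗ[K] g)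
    (hc : ∀ x y : g, B (N x) y = B x (N y)) :
    ∀ (j : ℤ) (x y : g), B ((N ^ j) x) y = B x ((N ^ j) y) := by
  have hcs : ∀ x y : g, B (N.symm x) y = B x (N.symm y) := by
    intro x y
    have h := hc (N.symm x) (N.symm y)
    simp only [LinearEquiv.apply_symm_apply] at h
    exact h.symm
  intro j
  induction j using Int.induction_on with
  | zero => intro x y; rw [zpow_zero]; rfl
  | succ i ih =>
    intro x y
    rw [zpow_succ_apply, hc, ih, ← zpow_succ_apply']
  | pred i ih =>
    intro x y
    rw [show (-(i : ℤ) - 1) = (-(i:ℤ)) - 1 from rfl, zpow_pred_apply, hcs, ih,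
      ← zpow_pred_apply']

/-- The key induction step: if `B` and `B ∘ M` are 2-cocycles compatible with the Nijenhuis
operator `M`, then `B ∘ M²` is a 2-cocycle. -/
lemma step (mul : g →ₗ[K] g →ₗ[K] g) (B : g →ₗ[K] g →ₗ[K] K) (M : g →ₗ[K] g)
    (hN : IsNijenhuis mul M)
    (hc : ∀ x y, B (M x) y = B x (M y))
    (h0 : ∀ x y z, B (mul x y) z - B x (mul y z) = B (mul y x) z - B y (mul x z))
    (h1 : ∀ x y z, B (mul x y) (M z) - B x (M (mul y z))
        = B (mul y x) (M z) - B y (M (mul x z))) :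
    ∀ x y z, B (mul x y) (M (M z)) - B x (M (M (mul y z)))
      = B (mul y x) (M (M z)) - B y (M (M (mul x z))) := by
  intro x y z
  have H1 := h1 x y (M z)
  have H2 := h0 (M y) x (M z)
  have H3 := h0 y (M x) (M z)
  have H4 := h1 (M y) x z
  have H5 := h1 y (M x) z
  have n1 : B x (mul (M y) (M z)) = B x (M (mul (M y) z)) + B x (M (mul y (M z)))
      - B x (M (M (mul y z))) := by
    rw [hN y z]; simp only [map_add, map_sub]
  have n2 : B y (mul (M x) (M z)) = B y (M (mul (M x) z)) + B y (M (mul x (M z)))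
      - B y (M (M (mul x z))) := by
    rw [hN x z]; simp only [map_add, map_sub]
  simp only [hc] at H2 H3 H4 H5
  linear_combination H1 + (H2 - H4 + H3 - H5 - n1 + n2) / 2

/-- All the bilinear forms `B_k = B ∘ N^k`, `k ∈ ℤ`, are 2-cocycles. -/
lemma coc_all (mul : g →ₗ[K] g →ₗ[K] g) (B : g →ₗ[K] g →ₗ[K] K) (N : g ≃ₗ[K] g)
    (hN : IsNijenhuis mul (N : g →ₗ[K] g))
    (hc : ∀ x y : g, B (N x) y = B x (N y))
    (h0 : ∀ x y z : g, B (mul x y) z - B x (mul y z) = B (mul y x) z - B y (mul x z))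
    (h1 : ∀ x y z : g, B (mul x y) (N z) - B x (N (mul y z))
        = B (mul y x) (N z) - B y (N (mul x z))) :
    ∀ k : ℤ, ∀ x y z : g,
      B (mul x y) ((N ^ k) z) - B x ((N ^ k) (mul y z))
        = B (mul y x) ((N ^ k) z) - B y ((N ^ k) (mul x z)) := by
  set Coc : ℤ → Prop := fun k => ∀ x y z : g,
      B (mul x y) ((N ^ k) z) - B x ((N ^ k) (mul y z))
        = B (mul y x) ((N ^ k) z) - B y ((N ^ k) (mul x z)) with hCoc
  suffices H : ∀ k : ℤ, Coc k ∧ Coc (k + 1) from fun k => (H k).1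
  intro k
  induction k using Int.induction_on with
  | zero =>
    constructor
    · intro x y z
      simp only [zpow_zero]
      exact h0 x y z
    · intro x y z
      simp only [zero_add, zpow_one]
      exact h1 x y z
  | succ i ih =>
    obtain ⟨hA, hB⟩ := ih
    refine ⟨hB, ?_⟩
    intro x y z
    have key := step mul (B.compl₂ ((N ^ (i : ℤ) : g ≃ₗ[K] g) : g →ₗ[K] g))
      (N : g →ₗ[K] g) hN
      (by
        intro a b
        simp only [LinearMap.compl₂_apply, LinearEquiv.coe_coe]
        rw [hc, ← zpow_succ_apply, zpow_succ_apply'])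
      (by
        intro a b c
        simp only [LinearMap.compl₂_apply, LinearEquiv.coe_coe]
        exact hA a b c)
      (by
        intro a b c
        simp only [LinearMap.compl₂_apply, LinearEquiv.coe_coe]
        simp only [← zpow_succ_apply']
        exact hB a b c) x y z
    simp only [LinearMap.compl₂_apply, LinearEquiv.coe_coe,
      ← zpow_succ_apply'] at key
    exact key
  | pred i ih =>
    obtain ⟨hA, hB⟩ := ih
    have h2 : Coc (-(i : ℤ) - 1) := by
      intro x y z
      have key := step mul (B.compl₂ ((N ^ (-(i : ℤ) + 1) : g ≃ₗ[K] g) : g →ₗ[K] g))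
        (N.symm : g →ₗ[K] g) (symm_nijenhuis mul N hN)
        (by
          intro a b
          simp only [LinearMap.compl₂_apply, LinearEquiv.coe_coe]
          have hcs : ∀ u v : g, B (N.symm u) v = B u (N.symm v) := by
            intro u v
            have h := hc (N.symm u) (N.symm v)
            simp only [LinearEquiv.apply_symm_apply] at h
            exact h.symm
          rw [hcs, ← zpow_pred_apply, zpow_pred_apply'])
        (by
          intro a b c
          simp only [LinearMap.compl₂_apply, LinearEquiv.coe_coe]
          exact hB a b c)
        (by
          intro a b c
          simp only [LinearMap.compl₂_apply, LinearEquiv.coe_coe]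
          simp only [← zpow_pred_apply']
          rw [show (-(i : ℤ) + 1 - 1) = -(i : ℤ) by ring]
          exact hA a b c) x y z
      simp only [LinearMap.compl₂_apply, LinearEquiv.coe_coe,
        ← zpow_pred_apply'] at key
      rw [show (-(i : ℤ) + 1 - 1 - 1) = -(i : ℤ) - 1 by ring] at key
      exact key
    refine ⟨h2, ?_⟩
    rw [show (-(i : ℤ) - 1 + 1) = -(i : ℤ) by ring]
    exact hA

end PHN

/-- A pseudo-Hessian-Nijenhuis structure `(B, N)` produces a sequence of pseudo-Hessian
structures `B_k(x,y) = B(x, N^k(y))`, and `(B_k, N^l)` is again pseudo-Hessian-Nijenhuis. -/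
theorem pseudoHessianNijenhuis_hierarchy [FiniteDimensional K g]
    (mul : g →ₗ[K] g →ₗ[K] g) (hmul : IsPreLie mul)
    (B : g →ₗ[K] g →ₗ[K] K) (N : g ≃ₗ[K] g)
    (h : IsPseudoHessianNijenhuis mul (fun x y => B x y) N) :
    (∀ k : ℤ, IsPseudoHessian mul (fun x y => B x ((N ^ k) y))) ∧
    (∀ k l : ℤ, l ≠ 0 →
      IsPseudoHessianNijenhuis mul (fun x y => B x ((N ^ k) y)) (N ^ l)) := by
  have hsym : ∀ x y : g, B x y = B y x := h.1.1
  have hnd : ∀ x : g, (∀ y : g, B x y = 0) → x = 0 := h.1.2.1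
  have h0 : ∀ x y z : g, B (mul x y) z - B x (mul y z)
      = B (mul y x) z - B y (mul x z) := h.1.2.2
  have hN : IsNijenhuis mul (N : g →ₗ[K] g) := h.2.1
  have hc : ∀ x y : g, B (N x) y = B x (N y) := h.2.2.1
  have h1 : ∀ x y z : g, B (mul x y) (N z) - B x (N (mul y z))
      = B (mul y x) (N z) - B y (N (mul x z)) := h.2.2.2
  have compat := PHN.zpow_compat B N hc
  have coc := PHN.coc_all mul B N hN hc h0 h1
  have part1 : ∀ k : ℤ, IsPseudoHessian mul (fun x y => B x ((N ^ k) y)) := by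
    intro k
    refine ⟨?_, ?_, ?_⟩
    · intro x y
      calc B x ((N ^ k) y) = B ((N ^ k) y) x := hsym _ _
        _ = B y ((N ^ k) x) := compat k y x
    · intro x hx
      apply hnd
      intro u
      have hu : B x ((N ^ k) ((N ^ (-k)) u)) = 0 := hx ((N ^ (-k)) u)
      rw [PHN.zpow_comm_apply, add_neg_cancel, zpow_zero] at hu
      exact hu
    · exact coc k
  refine ⟨part1, fun k l _ => ⟨part1 k, PHN.zpow_nijenhuis mul N hN l, ?_, ?_⟩⟩
  · intro x y
    calc B ((N ^ l) x) ((N ^ k) y) = B x ((N ^ l) ((N ^ k) y)) := compat l x _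
      _ = B x ((N ^ (l + k)) y) := by rw [PHN.zpow_comm_apply]
      _ = B x ((N ^ k) ((N ^ l) y)) := by rw [PHN.zpow_comm_apply, add_comm]
  · intro x y z
    simp only [PHN.zpow_comm_apply]
    exact coc (k + l) x y z
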